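/- Variance of the Horvitz–Thompson estimator under two-phase sampling: with S_c ⊆ S_v fixed, n = (S_v \ S_c).card ≥ 2, 1 ≤ r ≤ n, and S_r a simple random sample of size r from S_v \ S_c, the variance of the Horvitz–Thompson estimator, Var(τ̂_HT) = E[(τ̂_HT − τ)²], equals ∑_{i ∈ S_v} ((1 − π i)/π i) · (τ i)² + ∑_{i ∈ S_v} ∑_{j ∈ S_v, j ≠ i} ((π' i j − π i · π j)/(π i · π j)) · τ i · τ j. -/

import Mathlib

open Finset

lemma card_filter_mem_pc {α : Type*} [DecidableEq α] (T : Finset α) (r : ℕ) (hr : 1 ≤ r)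
    {i : α} (hi : i ∈ T) :
    ((T.powersetCard r).filter (fun S => i ∈ S)).card
      = ((T.erase i).powersetCard (r-1)).card := by
  refine Finset.card_bij' (fun S _ => S.erase i) (fun S _ => insert i S) ?hi ?hj ?li ?ri
  case hi =>
    intro S hS
    simp only [mem_filter, mem_powersetCard] at hS
    obtain ⟨⟨hsub, hcard⟩, hiS⟩ := hS
    rw [mem_powersetCard]
    exact ⟨erase_subset_erase _ hsub, by rw [card_erase_of_mem hiS, hcard]⟩
  case hj =>
    intro S hS
    rw [mem_powersetCard] at hS
    obtain ⟨hsub, hcard⟩ := hS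
    have hiS : i ∉ S := fun h => (mem_erase.mp (hsub h)).1 rfl
    simp only [mem_filter, mem_powersetCard]
    refine ⟨⟨insert_subset hi (hsub.trans (erase_subset _ _)), ?_⟩, mem_insert_self _ _⟩
    rw [card_insert_of_notMem hiS, hcard]
    omega
  case li =>
    intro S hS
    simp only [mem_filter] at hS
    exact insert_erase hS.2
  case ri =>
    intro S hS
    rw [mem_powersetCard] at hS
    exact erase_insert (fun h => (mem_erase.mp (hS.1 h)).1 rfl)

lemma card_filter_mem2_pc {α : Type*} [DecidableEq α] (T : Finset α) (r : ℕ) (hr : 2 ≤ r)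
    {i j : α} (hi : i ∈ T) (hj : j ∈ T) (hij : j ≠ i) :
    ((T.powersetCard r).filter (fun S => i ∈ S ∧ j ∈ S)).card
      = (((T.erase i).erase j).powersetCard (r-2)).card := by
  refine Finset.card_bij' (fun S _ => (S.erase i).erase j)
    (fun S _ => insert i (insert j S)) ?hi ?hj ?li ?ri
  case hi =>
    intro S hS
    simp only [mem_filter, mem_powersetCard] at hS
    obtain ⟨⟨hsub, hcard⟩, hiS, hjS⟩ := hS
    rw [mem_powersetCard]
    refine ⟨erase_subset_erase _ (erase_subset_erase _ hsub), ?_⟩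
    rw [card_erase_of_mem (mem_erase.mpr ⟨hij, hjS⟩), card_erase_of_mem hiS, hcard]
    omega
  case hj =>
    intro S hS
    rw [mem_powersetCard] at hS
    obtain ⟨hsub, hcard⟩ := hS
    have hjS : j ∉ S := fun h => (mem_erase.mp (hsub h)).1 rfl
    have hiS : i ∉ S := fun h => (mem_erase.mp (mem_of_mem_erase (hsub h))).1 rfl
    have hij' : i ≠ j := fun h => hij h.symm
    simp only [mem_filter, mem_powersetCard]
    refine ⟨⟨?_, ?_⟩, mem_insert_self _ _, mem_insert_of_mem (mem_insert_self _ _)⟩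
    · refine insert_subset hi (insert_subset hj ?_)
      exact hsub.trans ((erase_subset _ _).trans (erase_subset _ _))
    · rw [card_insert_of_notMem (by simp [hiS, hij']), card_insert_of_notMem hjS, hcard]
      omega
  case li =>
    intro S hS
    simp only [mem_filter] at hS
    show insert i (insert j ((S.erase i).erase j)) = S
    rw [insert_erase (mem_erase.mpr ⟨hij, hS.2.2⟩), insert_erase hS.2.1]
  case ri =>
    intro S hS
    rw [mem_powersetCard] at hS
    have hjS : j ∉ S := fun h => (mem_erase.mp (hS.1 h)).1 rfl
    have hiS : i ∉ insert j S := by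
      simp only [mem_insert]
      rintro (h | h)
      · exact hij h.symm
      · exact (mem_erase.mp (mem_of_mem_erase (hS.1 h))).1 rfl
    show ((insert i (insert j S)).erase i).erase j = S
    rw [erase_insert hiS, erase_insert hjS]

lemma sum_pc_single {α : Type*} [DecidableEq α] (T : Finset α) (r : ℕ) (f : α → ℝ) :
    ∑ S ∈ T.powersetCard r, ∑ i ∈ S, f i
      = ∑ i ∈ T, (((T.powersetCard r).filter (fun S => i ∈ S)).card : ℝ) * f i := by
  have h1 : ∀ S ∈ T.powersetCard r, ∑ i ∈ S, f i = ∑ i ∈ T, if i ∈ S then f i else 0 := by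
    intro S hS
    rw [mem_powersetCard] at hS
    rw [← Finset.sum_filter]
    congr 1
    ext x
    simp only [mem_filter]
    exact ⟨fun h => ⟨hS.1 h, h⟩, fun h => h.2⟩
  rw [Finset.sum_congr rfl h1, Finset.sum_comm]
  refine Finset.sum_congr rfl fun i hi => ?_
  rw [← Finset.sum_filter, Finset.sum_const, nsmul_eq_mul]

lemma sum_pc_pair {α : Type*} [DecidableEq α] (T : Finset α) (r : ℕ) (g : α → α → ℝ) :
    ∑ S ∈ T.powersetCard r, ∑ i ∈ S, ∑ j ∈ S.erase i, g i j
      = ∑ i ∈ T, ∑ j ∈ T.erase i,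
          (((T.powersetCard r).filter (fun S => i ∈ S ∧ j ∈ S)).card : ℝ) * g i j := by
  have h1 : ∀ S ∈ T.powersetCard r, ∑ i ∈ S, ∑ j ∈ S.erase i, g i j
      = ∑ i ∈ T, ∑ j ∈ T.erase i, if i ∈ S ∧ j ∈ S then g i j else 0 := by
    intro S hS
    rw [mem_powersetCard] at hS
    calc ∑ i ∈ S, ∑ j ∈ S.erase i, g i j
        = ∑ i ∈ T, if i ∈ S then ∑ j ∈ S.erase i, g i j else 0 := by
          rw [← Finset.sum_filter]
          apply Finset.sum_congr _ (fun _ _ => rfl)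
          ext x
          simp only [mem_filter]
          exact ⟨fun h => ⟨hS.1 h, h⟩, fun h => h.2⟩
      _ = ∑ i ∈ T, ∑ j ∈ T.erase i, if i ∈ S ∧ j ∈ S then g i j else 0 := by
          refine Finset.sum_congr rfl fun i hi => ?_
          by_cases hiS : i ∈ S
          · simp only [hiS, if_true, true_and]
            rw [← Finset.sum_filter]
            apply Finset.sum_congr _ (fun _ _ => rfl)
            ext x
            simp only [mem_filter, mem_erase]
            constructor
            · rintro ⟨hx, hxS⟩
              exact ⟨⟨hx, hS.1 hxS⟩, hxS⟩
            · rintro ⟨⟨hx, _⟩, hxS⟩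
              exact ⟨hx, hxS⟩
          · simp [hiS]
  rw [Finset.sum_congr rfl h1, Finset.sum_comm]
  refine Finset.sum_congr rfl fun i hi => ?_
  rw [Finset.sum_comm]
  refine Finset.sum_congr rfl fun j hj => ?_
  rw [← Finset.sum_filter, Finset.sum_const, nsmul_eq_mul]

lemma choose_id1 (n r : ℕ) (h1 : 1 ≤ r) (hrn : r ≤ n) :
    (r : ℝ) * (n.choose r : ℝ) = (n : ℝ) * ((n-1).choose (r-1) : ℝ) := by
  obtain ⟨a, rfl⟩ : ∃ a, n = a + 1 := ⟨n - 1, by omega⟩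
  obtain ⟨b, rfl⟩ : ∃ b, r = b + 1 := ⟨r - 1, by omega⟩
  have h := Nat.add_one_mul_choose_eq a b
  have : (b+1) * ((a+1).choose (b+1)) = (a+1) * (a.choose b) := by rw [mul_comm]; exact h.symm
  simp only [Nat.add_sub_cancel]
  exact_mod_cast this

lemma choose_id2 (n r : ℕ) (h2 : 2 ≤ r) (hrn : r ≤ n) :
    (r : ℝ) * ((r : ℝ) - 1) * (n.choose r : ℝ)
      = (n : ℝ) * ((n : ℝ) - 1) * ((n-2).choose (r-2) : ℝ) := by
  obtain ⟨a, rfl⟩ : ∃ a, n = a + 2 := ⟨n - 2, by omega⟩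
  obtain ⟨b, rfl⟩ : ∃ b, r = b + 2 := ⟨r - 2, by omega⟩
  have h1 := Nat.add_one_mul_choose_eq (a+1) (b+1)
  have h2' := Nat.add_one_mul_choose_eq a b
  have key : (b+2) * (b+1) * ((a+2).choose (b+2)) = (a+2) * (a+1) * (a.choose b) := by
    nlinarith [h1, h2']
  simp only [Nat.add_sub_cancel]
  have := congrArg (fun x : ℕ => (x : ℝ)) key
  push_cast at this ⊢
  linarith [this]
open Finset


/-- Variance of the Horvitz–Thompson estimator under two-phase sampling: with a fixed
subset `S_c ⊆ S_v`, `n = (S_v \ S_c).card ≥ 2`, `1 ≤ r ≤ n`, and a simple random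
sample `S_r` of size `r` drawn uniformly from the `r`-element subsets of `S_v \ S_c`
(so expectations are averages over `(S_v \ S_c).powersetCard r`), the variance
`E[(τ̂_HT − τ)²]` of the Horvitz–Thompson estimator equals
`∑_{i ∈ S_v} ((1 − π i)/π i) (τ i)² +
 ∑_{i ∈ S_v} ∑_{j ∈ S_v, j ≠ i} ((π' i j − π i π j)/(π i π j)) τ i τ j`. -/
theorem horvitz_thompson_variance {α : Type*} [DecidableEq α]
    (S_v S_c : Finset α) (hsub : S_c ⊆ S_v) (τ : α → ℝ)
    (n r : ℕ) (hn : n = (S_v \ S_c).card) (hn2 : 2 ≤ n) (hr1 : 1 ≤ r) (hrn : r ≤ n)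
    (π : α → ℝ)
    (hπc : ∀ i ∈ S_c, π i = 1)
    (hπr : ∀ i ∈ S_v \ S_c, π i = (r : ℝ) / (n : ℝ))
    (π' : α → α → ℝ)
    (hπ'cc : ∀ i ∈ S_c, ∀ j ∈ S_c, π' i j = 1)
    (hπ'cr : ∀ i ∈ S_c, ∀ j ∈ S_v \ S_c, π' i j = (r : ℝ) / (n : ℝ))
    (hπ'rc : ∀ i ∈ S_v \ S_c, ∀ j ∈ S_c, π' i j = (r : ℝ) / (n : ℝ))
    (hπ'rr : ∀ i ∈ S_v \ S_c, ∀ j ∈ S_v \ S_c,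
        π' i j = ((r : ℝ) * ((r : ℝ) - 1)) / ((n : ℝ) * ((n : ℝ) - 1))) :
    (∑ S ∈ (S_v \ S_c).powersetCard r,
        ((∑ i ∈ S_c, τ i + ((n : ℝ) / (r : ℝ)) * ∑ i ∈ S, τ i) - ∑ i ∈ S_v, τ i) ^ 2)
      / (((S_v \ S_c).powersetCard r).card : ℝ)
    = ∑ i ∈ S_v, ((1 - π i) / π i) * (τ i) ^ 2
      + ∑ i ∈ S_v, ∑ j ∈ S_v.erase i,
          ((π' i j - π i * π j) / (π i * π j)) * τ i * τ j := by
  have hTn : (S_v \ S_c).card = n := hn.symm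
  have hn0 : (n : ℝ) ≠ 0 := Nat.cast_ne_zero.mpr (by omega)
  have hr0 : (r : ℝ) ≠ 0 := Nat.cast_ne_zero.mpr (by omega)
  have hn1 : (n : ℝ) - 1 ≠ 0 := by
    have : (2 : ℝ) ≤ (n : ℝ) := by exact_mod_cast hn2
    linarith
  have hN0 : ((n.choose r : ℕ) : ℝ) ≠ 0 := Nat.cast_ne_zero.mpr (Nat.choose_pos hrn).ne'
  set t := ∑ i ∈ S_v \ S_c, τ i with ht
  set Q := ∑ i ∈ S_v \ S_c, (τ i) ^ 2 with hQ
  set P := ∑ i ∈ S_v \ S_c, ∑ j ∈ (S_v \ S_c).erase i, τ i * τ j with hP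
  set C1 : ℝ := (((n - 1).choose (r - 1) : ℕ) : ℝ) with hC1def
  set N : ℝ := ((n.choose r : ℕ) : ℝ) with hNdef
  -- general square expansion
  have hsq : ∀ S : Finset α, (∑ i ∈ S, τ i) ^ 2
      = ∑ i ∈ S, (τ i) ^ 2 + ∑ i ∈ S, ∑ j ∈ S.erase i, τ i * τ j := by
    intro S
    rw [sq, Finset.sum_mul_sum, ← Finset.sum_add_distrib]
    refine Finset.sum_congr rfl fun i hi => ?_
    rw [← Finset.add_sum_erase S (fun j => τ i * τ j) hi]
    ring
  -- pair count
  obtain ⟨K, hKcard, id2⟩ : ∃ K : ℝ,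
      (∀ i ∈ S_v \ S_c, ∀ j ∈ (S_v \ S_c).erase i,
        ((((S_v \ S_c).powersetCard r).filter (fun S => i ∈ S ∧ j ∈ S)).card : ℝ) = K)
      ∧ (r : ℝ) * ((r : ℝ) - 1) * N = (n : ℝ) * ((n : ℝ) - 1) * K := by
    rcases eq_or_lt_of_le hr1 with hr1' | hr2
    · refine ⟨0, ?_, ?_⟩
      · intro i hi j hj
        norm_cast
        rw [Finset.card_eq_zero, Finset.filter_eq_empty_iff]
        intro S hS
        rw [mem_powersetCard] at hS
        rintro ⟨hiS, hjS⟩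
        have h1 : 1 < S.card :=
          Finset.one_lt_card.mpr ⟨i, hiS, j, hjS, fun h => (Finset.mem_erase.mp hj).1 h.symm⟩
        omega
      · rw [← hr1']
        push_cast
        ring
    · refine ⟨(((n - 2).choose (r - 2) : ℕ) : ℝ), ?_, choose_id2 n r hr2 hrn⟩
      intro i hi j hj
      have hji : j ≠ i := (Finset.mem_erase.mp hj).1
      rw [card_filter_mem2_pc _ r hr2 hi (Finset.mem_of_mem_erase hj) hji, card_powersetCard]
      have hcc : (((S_v \ S_c).erase i).erase j).card = n - 2 := by
        rw [card_erase_of_mem hj, card_erase_of_mem hi, hTn]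
        omega
      rw [hcc]
  -- single count
  have hc1 : ∀ i ∈ S_v \ S_c,
      ((((S_v \ S_c).powersetCard r).filter (fun S => i ∈ S)).card : ℝ) = C1 := by
    intro i hi
    rw [card_filter_mem_pc _ r hr1 hi, card_powersetCard, card_erase_of_mem hi, hTn]
  have id1 : (r : ℝ) * N = (n : ℝ) * C1 := choose_id1 n r hr1 hrn
  -- expectation of linear terms
  have hsumX : ∑ S ∈ (S_v \ S_c).powersetCard r, ∑ i ∈ S, τ i = C1 * t := by
    rw [sum_pc_single]
    calc ∑ i ∈ S_v \ S_c,
          ((((S_v \ S_c).powersetCard r).filter (fun S => i ∈ S)).card : ℝ) * τ i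
        = ∑ i ∈ S_v \ S_c, C1 * τ i :=
          Finset.sum_congr rfl fun i hi => by rw [hc1 i hi]
      _ = C1 * t := (Finset.mul_sum _ _ _).symm
  have hsumQ : ∑ S ∈ (S_v \ S_c).powersetCard r, ∑ i ∈ S, (τ i) ^ 2 = C1 * Q := by
    rw [sum_pc_single]
    calc ∑ i ∈ S_v \ S_c,
          ((((S_v \ S_c).powersetCard r).filter (fun S => i ∈ S)).card : ℝ) * (τ i) ^ 2
        = ∑ i ∈ S_v \ S_c, C1 * (τ i) ^ 2 :=
          Finset.sum_congr rfl fun i hi => by rw [hc1 i hi]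
      _ = C1 * Q := (Finset.mul_sum _ _ _).symm
  have hsumP : ∑ S ∈ (S_v \ S_c).powersetCard r, ∑ i ∈ S, ∑ j ∈ S.erase i, τ i * τ j
      = K * P := by
    rw [sum_pc_pair]
    calc ∑ i ∈ S_v \ S_c, ∑ j ∈ (S_v \ S_c).erase i,
          ((((S_v \ S_c).powersetCard r).filter (fun S => i ∈ S ∧ j ∈ S)).card : ℝ)
            * (τ i * τ j)
        = ∑ i ∈ S_v \ S_c, ∑ j ∈ (S_v \ S_c).erase i, K * (τ i * τ j) := by
          refine Finset.sum_congr rfl fun i hi => Finset.sum_congr rfl fun j hj => ?_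
          rw [hKcard i hi j hj]
      _ = ∑ i ∈ S_v \ S_c, K * ∑ j ∈ (S_v \ S_c).erase i, τ i * τ j := by
          refine Finset.sum_congr rfl fun i hi => (Finset.mul_sum _ _ _).symm
      _ = K * P := (Finset.mul_sum _ _ _).symm
  have hsumX2 : ∑ S ∈ (S_v \ S_c).powersetCard r, (∑ i ∈ S, τ i) ^ 2 = C1 * Q + K * P := by
    rw [Finset.sum_congr rfl fun S _ => hsq S, Finset.sum_add_distrib, hsumQ, hsumP]
  -- LHS numerator
  have hsv : ∑ i ∈ S_v, τ i = t + ∑ i ∈ S_c, τ i := (Finset.sum_sdiff hsub).symm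
  have hnum : ∀ S ∈ (S_v \ S_c).powersetCard r,
      ((∑ i ∈ S_c, τ i + ((n : ℝ) / (r : ℝ)) * ∑ i ∈ S, τ i) - ∑ i ∈ S_v, τ i) ^ 2
        = ((n : ℝ) / r) ^ 2 * (∑ i ∈ S, τ i) ^ 2
          - 2 * ((n : ℝ) / r) * t * (∑ i ∈ S, τ i) + t ^ 2 := by
    intro S _
    rw [hsv]
    ring
  have key1 : ∑ S ∈ (S_v \ S_c).powersetCard r,
      ((∑ i ∈ S_c, τ i + ((n : ℝ) / (r : ℝ)) * ∑ i ∈ S, τ i) - ∑ i ∈ S_v, τ i) ^ 2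
      = ((n : ℝ) / r) ^ 2 * (C1 * Q + K * P) - 2 * ((n : ℝ) / r) * C1 * t ^ 2 + N * t ^ 2 := by
    rw [Finset.sum_congr rfl hnum, Finset.sum_add_distrib, Finset.sum_sub_distrib,
      ← Finset.mul_sum, ← Finset.mul_sum, Finset.sum_const, nsmul_eq_mul,
      card_powersetCard, hTn, hsumX2, hsumX]
    ring
  -- RHS first sum
  have hA : ∑ i ∈ S_v, ((1 - π i) / π i) * (τ i) ^ 2
      = ((1 - (r : ℝ) / n) / ((r : ℝ) / n)) * Q := by
    rw [← Finset.sum_subset (Finset.sdiff_subset : S_v \ S_c ⊆ S_v) ?_]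
    · calc ∑ i ∈ S_v \ S_c, ((1 - π i) / π i) * (τ i) ^ 2
          = ∑ i ∈ S_v \ S_c, ((1 - (r : ℝ) / n) / ((r : ℝ) / n)) * (τ i) ^ 2 :=
            Finset.sum_congr rfl fun i hi => by rw [hπr i hi]
        _ = ((1 - (r : ℝ) / n) / ((r : ℝ) / n)) * Q := (Finset.mul_sum _ _ _).symm
    · intro x hx hnx
      have hxc : x ∈ S_c := by
        by_contra hc
        exact hnx (Finset.mem_sdiff.mpr ⟨hx, hc⟩)
      rw [hπc x hxc]
      norm_num
  -- RHS second sum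
  have hB : ∑ i ∈ S_v, ∑ j ∈ S_v.erase i,
        ((π' i j - π i * π j) / (π i * π j)) * τ i * τ j
      = (((r : ℝ) * ((r : ℝ) - 1) / ((n : ℝ) * ((n : ℝ) - 1)) - ((r : ℝ) / n) * ((r : ℝ) / n))
          / (((r : ℝ) / n) * ((r : ℝ) / n))) * P := by
    rw [← Finset.sum_subset (Finset.sdiff_subset : S_v \ S_c ⊆ S_v) ?_]
    · calc ∑ i ∈ S_v \ S_c, ∑ j ∈ S_v.erase i,
            ((π' i j - π i * π j) / (π i * π j)) * τ i * τ j
          = ∑ i ∈ S_v \ S_c, ∑ j ∈ (S_v \ S_c).erase i,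
            (((r : ℝ) * ((r : ℝ) - 1) / ((n : ℝ) * ((n : ℝ) - 1)) - ((r : ℝ) / n) * ((r : ℝ) / n))
              / (((r : ℝ) / n) * ((r : ℝ) / n))) * (τ i * τ j) := by
            refine Finset.sum_congr rfl fun i hi => ?_
            rw [← Finset.sum_subset
              (Finset.erase_subset_erase i (Finset.sdiff_subset : S_v \ S_c ⊆ S_v)) ?_]
            · refine Finset.sum_congr rfl fun j hj => ?_
              rw [hπ'rr i hi j (Finset.mem_of_mem_erase hj), hπr i hi,
                hπr j (Finset.mem_of_mem_erase hj)]
              ring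
            · intro j hj hnj
              have hjc : j ∈ S_c := by
                by_contra hc
                exact hnj (Finset.mem_erase.mpr ⟨(Finset.mem_erase.mp hj).1,
                  Finset.mem_sdiff.mpr ⟨Finset.mem_of_mem_erase hj, hc⟩⟩)
              rw [hπ'rc i hi j hjc, hπc j hjc, hπr i hi, mul_one, sub_self, zero_div,
                zero_mul, zero_mul]
        _ = ∑ i ∈ S_v \ S_c,
            (((r : ℝ) * ((r : ℝ) - 1) / ((n : ℝ) * ((n : ℝ) - 1)) - ((r : ℝ) / n) * ((r : ℝ) / n))
              / (((r : ℝ) / n) * ((r : ℝ) / n))) * ∑ j ∈ (S_v \ S_c).erase i, τ i * τ j := by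
            exact Finset.sum_congr rfl fun i hi => (Finset.mul_sum _ _ _).symm
        _ = _ := (Finset.mul_sum _ _ _).symm
    · intro i hi hni
      have hic : i ∈ S_c := by
        by_contra hc
        exact hni (Finset.mem_sdiff.mpr ⟨hi, hc⟩)
      refine Finset.sum_eq_zero fun j hj => ?_
      by_cases hjc : j ∈ S_c
      · rw [hπ'cc i hic j hjc, hπc i hic, hπc j hjc]
        norm_num
      · have hjT : j ∈ S_v \ S_c := Finset.mem_sdiff.mpr ⟨Finset.mem_of_mem_erase hj, hjc⟩
        rw [hπ'cr i hic j hjT, hπc i hic, hπr j hjT, one_mul, sub_self, zero_div,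
          zero_mul, zero_mul]
  -- assemble
  rw [key1, hA, hB, card_powersetCard, hTn]
  have hC1e : C1 = (r : ℝ) * N / n := by
    rw [eq_div_iff hn0]
    linarith [id1]
  have hKe : K = (r : ℝ) * ((r : ℝ) - 1) * N / ((n : ℝ) * ((n : ℝ) - 1)) := by
    rw [eq_div_iff (mul_ne_zero hn0 hn1)]
    linear_combination -id2
  have hQe : Q = t ^ 2 - P := by
    have := hsq (S_v \ S_c)
    rw [← ht, ← hQ, ← hP] at this
    linarith
  rw [hC1e, hKe, hQe]
  rw [← hNdef]
  field_simp
  ring
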